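/- Let 1 < α < 2 and n ≥ 2. Then (n-1)^α · ∑_{k=0}^{n-1} g_k^α < n^α · ∑_{k=0}^{n} g_k^α. -/

import Mathlib

/-- Grünwald–Letnikov coefficient `g_k^α = (-1)^k * binom(α,k)`. -/
noncomputable def gl (a : ℝ) (k : ℕ) : ℝ :=
  (-1 : ℝ) ^ k * (∏ j ∈ Finset.range k, (a - j)) / (Nat.factorial k : ℝ)

/-- Shifted Grünwald weights. -/
noncomputable def glw (a : ℝ) : ℕ → ℝ
  | 0 => a / 2 * gl a 0
  | (k+1) => a / 2 * gl a (k+1) + (2 - a) / 2 * gl a k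

/-- Second-order Lubich coefficients `l_m^{2,γ}`. -/
noncomputable def lub2 (g : ℝ) (m : ℕ) : ℝ :=
  (3/2 : ℝ) ^ g * ∑ k ∈ Finset.range (m+1), (1/3 : ℝ) ^ k * gl g k * gl g (m - k)

/-- The Toeplitz matrix `B_α` of size `(M-1) × (M-1)`. -/
noncomputable def Bmat (a : ℝ) (M : ℕ) : Matrix (Fin (M-1)) (Fin (M-1)) ℝ :=
  fun i j => if (j : ℕ) ≤ (i : ℕ) + 1 then glw a ((i : ℕ) + 1 - (j : ℕ)) else 0

/-- The symmetric matrix `A_α = B_α + B_αᵀ`. -/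
noncomputable def Amat (a : ℝ) (M : ℕ) : Matrix (Fin (M-1)) (Fin (M-1)) ℝ :=
  Bmat a M + (Bmat a M).transpose

lemma gl_succ (a : ℝ) (k : ℕ) :
    gl a (k+1) = ((k : ℝ) - a) / (k + 1) * gl a k := by
  have hk : ((k.factorial : ℝ)) ≠ 0 := Nat.cast_ne_zero.2 k.factorial_ne_zero
  have hk1 : ((k : ℝ) + 1) ≠ 0 := by positivity
  simp only [gl, Finset.prod_range_succ, Nat.factorial_succ, Nat.cast_mul, pow_succ]
  push_cast
  field_simp
  ring

lemma sum_gl (a : ℝ) (n : ℕ) :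
    ∑ k ∈ Finset.range (n+1), gl a k = gl (a-1) n := by
  induction n with
  | zero => simp [gl]
  | succ n ih =>
    rw [Finset.sum_range_succ, ih]
    have h1 : ∏ j ∈ Finset.range (n+1), (a - (j : ℝ)) =
        (∏ j ∈ Finset.range n, (a - 1 - (j : ℝ))) * a := by
      rw [Finset.prod_range_succ']
      congr 1
      · exact Finset.prod_congr rfl (fun j _ => by push_cast; ring
        )
      · simp
    have hk : ((n.factorial : ℝ)) ≠ 0 := Nat.cast_ne_zero.2 n.factorial_ne_zero
    have hk1 : ((n : ℝ) + 1) ≠ 0 := by positivity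
    simp only [gl, h1, Finset.prod_range_succ, Nat.factorial_succ, Nat.cast_mul, pow_succ]
    push_cast
    field_simp
    ring

lemma gl_neg {b : ℝ} (hb0 : 0 < b) (hb1 : b < 1) : ∀ m, 1 ≤ m → gl b m < 0 := by
  intro m hm
  induction m with
  | zero => omega
  | succ m ih =>
    rcases Nat.eq_or_lt_of_le hm with h | h
    · have : m = 0 := by omega
      subst this
      simp only [gl]
      norm_num [Nat.factorial]
      linarith
    · have hm1 : 1 ≤ m := by omega
      have := ih hm1
      rw [gl_succ]
      have hpos : 0 < ((m : ℝ) - b) / (m + 1) := by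
        have : (1 : ℝ) ≤ (m : ℝ) := by exact_mod_cast hm1
        apply div_pos <;> linarith
      exact mul_neg_of_pos_of_neg hpos this

theorem stmt5 (α : ℝ) (hα1 : 1 < α) (hα2 : α < 2) (n : ℕ) (hn : 2 ≤ n) :
    ((n : ℝ) - 1) ^ α * ∑ k ∈ Finset.range n, gl α k <
      (n : ℝ) ^ α * ∑ k ∈ Finset.range (n+1), gl α k := by
  set b := α - 1 with hb
  have hb0 : 0 < b := by simp [hb]; linarith
  have hb1 : b < 1 := by simp [hb]; linarith
  obtain ⟨m, rfl⟩ : ∃ m, n = m + 1 := ⟨n - 1, by omega⟩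
  have hm1 : 1 ≤ m := by omega
  have hmR : (1 : ℝ) ≤ (m : ℝ) := by exact_mod_cast hm1
  rw [sum_gl α m, sum_gl α (m+1)]
  have hba : α - 1 = b := rfl
  rw [hba, gl_succ b m]
  have hT : gl b m < 0 := gl_neg hb0 hb1 m hm1
  have hcast : ((m + 1 : ℕ) : ℝ) = (m : ℝ) + 1 := by push_cast; ring
  rw [hcast]
  have hN : (0 : ℝ) < (m : ℝ) + 1 := by linarith
  -- key inequality : ((m+1) : ℝ)^α * ((m - b)/(m+1)) < ((m+1) - 1)^α = m^α
  have key : ((m : ℝ) + 1) ^ α * (((m : ℝ) - b) / ((m : ℝ) + 1)) < ((m : ℝ) + 1 - 1) ^ α := by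
    have hs : (-1 : ℝ) ≤ -1 / ((m : ℝ) + 1) := by
      rw [le_div_iff₀ hN]; linarith
    have hs' : (-1 : ℝ) / ((m : ℝ) + 1) ≠ 0 := by
      apply div_ne_zero <;> [norm_num; positivity]
    have hbern := one_add_mul_self_lt_rpow_one_add hs hs' hα1
    have h1 : (1 : ℝ) + (-1) / ((m : ℝ) + 1) = (m : ℝ) / ((m : ℝ) + 1) := by
      field_simp
      ring
    have hpow : ((m : ℝ) + 1) ^ α * ((m : ℝ) / ((m : ℝ) + 1)) ^ α = (m : ℝ) ^ α := by
      rw [← Real.mul_rpow (by linarith) (by positivity)]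
      rw [mul_div_cancel₀ _ (ne_of_gt hN)]
    have hmono : ((m : ℝ) + 1) ^ α * (1 + α * (-1 / ((m : ℝ) + 1))) <
        ((m : ℝ) + 1) ^ α * ((m : ℝ) / ((m : ℝ) + 1)) ^ α := by
      apply mul_lt_mul_of_pos_left _ (Real.rpow_pos_of_pos hN α)
      rw [← h1]; exact hbern
    have heq : (1 : ℝ) + α * (-1 / ((m : ℝ) + 1)) = ((m : ℝ) - b) / ((m : ℝ) + 1) := by
      rw [hb]; field_simp; ring
    rw [heq] at hmono
    rw [hpow] at hmono
    have : ((m : ℝ) + 1 - 1) ^ α = (m : ℝ) ^ α := by norm_num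
    rw [this]
    exact hmono
  calc ((m : ℝ) + 1 - 1) ^ α * gl b m
      < (((m : ℝ) + 1) ^ α * (((m : ℝ) - b) / ((m : ℝ) + 1))) * gl b m := by
        exact mul_lt_mul_of_neg_right key hT
    _ = ((m : ℝ) + 1) ^ α * (((m : ℝ) - b) / ((m : ℝ) + 1) * gl b m) := by ring
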